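/- As ℓ → 0, the function P_ℓ(s) = (ℓ/π)[1 − exp(−s²/2)] + (2/π)∫₀^{π/2 − ℓ/2} [1 − exp(−s²/(2 cos(u)²))] du converges pointwise to P₀(s) = (2/π)∫₀^{π/2} [1 − exp(−s²/(2 cos(u)²))] du, and P₀(s) = P(|Z| ≤ s) = 2Φ(s) − 1 where Z is standard normal with CDF Φ. Consequently the (1−α)-quantile of P₀ equals Φ⁻¹(1 − α/2). -/

import Mathlib

open Real Set Filter MeasureTheory ProbabilityTheory
open scoped Topology


lemma exp_le_one_aux (s u : ℝ) : -s ^ 2 / (2 * Real.cos u ^ 2) ≤ 0 :=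
  div_nonpos_of_nonpos_of_nonneg (neg_nonpos.mpr (sq_nonneg s)) (by positivity)

lemma g_mble (s : ℝ) : Measurable (fun u => 1 - Real.exp (-s ^ 2 / (2 * Real.cos u ^ 2))) := by
  fun_prop

lemma g_bound (s u : ℝ) : |1 - Real.exp (-s ^ 2 / (2 * Real.cos u ^ 2))| ≤ 1 := by
  rw [abs_of_nonneg (by simp [Real.exp_le_one_iff.mpr (exp_le_one_aux s u)])]
  simp [Real.exp_pos]
  positivity

lemma intInt_of_bounded {f : ℝ → ℝ} (hm : Measurable f) {C : ℝ} (hb : ∀ x, |f x| ≤ C)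
    (a b : ℝ) : IntervalIntegrable f volume a b := by
  rw [intervalIntegrable_iff]
  exact Measure.integrableOn_of_bounded measure_Ioc_lt_top.ne hm.aestronglyMeasurable
    (ae_of_all _ fun x => by rw [Real.norm_eq_abs]; exact hb x)

noncomputable def dd (s u : ℝ) : ℝ := s / Real.cos u ^ 2 * Real.exp (-s ^ 2 / (2 * Real.cos u ^ 2))

lemma dd_mble (s : ℝ) : Measurable (dd s) := by unfold dd; fun_prop

lemma dd_nonneg {s : ℝ} (hs : 0 ≤ s) (u : ℝ) : 0 ≤ dd s u := by
  unfold dd; positivity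

lemma key_ineq {x : ℝ} (hx : 0 < x) {c : ℝ} (hc : 0 ≤ c) :
    x / c * Real.exp (-x ^ 2 / (2 * c)) ≤ 2 / x := by
  rcases hc.eq_or_lt with h | h
  · simp [← h]; positivity
  · have hy : 0 < x ^ 2 / (2 * c) := by positivity
    have h1 : Real.exp (-x ^ 2 / (2 * c)) ≤ (x ^ 2 / (2 * c))⁻¹ := by
      rw [neg_div, Real.exp_neg]
      exact inv_anti₀ hy (by linarith [Real.add_one_le_exp (x ^ 2 / (2 * c))])
    calc x / c * Real.exp (-x ^ 2 / (2 * c)) ≤ x / c * (x ^ 2 / (2 * c))⁻¹ := by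
          apply mul_le_mul_of_nonneg_left h1 (by positivity)
      _ = 2 / x := by field_simp

lemma dd_bound {s : ℝ} (hs : 0 < s) (u : ℝ) : |dd s u| ≤ 2 / s := by
  rw [abs_of_nonneg (dd_nonneg hs.le u)]
  exact key_ineq hs (by positivity)



lemma sqrt_two_pi : Real.sqrt (2 * π) = 2 * Real.sqrt (π / 2) := by
  rw [show (2 * π : ℝ) = 2 ^ 2 * (π / 2) by ring, Real.sqrt_mul (by positivity),
    Real.sqrt_sq (by norm_num : (0:ℝ) ≤ 2)]

lemma int_exp_half : Integrable (fun x : ℝ => Real.exp (-x ^ 2 / 2)) := by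
  have h : ∀ x : ℝ, -(1/2 : ℝ) * x ^ 2 = -x ^ 2 / 2 := fun x => by ring
  simpa only [h] using integrable_exp_neg_mul_sq (show (0:ℝ) < 1/2 by norm_num)

lemma int_Ioi_exp_half : ∫ x in Ioi (0:ℝ), Real.exp (-x ^ 2 / 2) = Real.sqrt (π / 2) := by
  have h : ∀ x : ℝ, -(1/2 : ℝ) * x ^ 2 = -x ^ 2 / 2 := fun x => by ring
  have := integral_gaussian_Ioi (1/2 : ℝ)
  simp only [h] at this
  rw [this, show (π / (1/2) : ℝ) = 2 * π by ring, sqrt_two_pi]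
  ring

lemma lemA {s : ℝ} (hs : 0 < s) :
    ∫ u in (0:ℝ)..(π/2), dd s u = Real.sqrt (π / 2) * Real.exp (-s ^ 2 / 2) := by
  have hcont : Continuous (fun b => ∫ u in (0:ℝ)..b, dd s u) :=
    intervalIntegral.continuous_primitive (fun a b => intInt_of_bounded (dd_mble s) (dd_bound hs) a b) 0
  have l1 : Tendsto (fun b => ∫ u in (0:ℝ)..b, dd s u) (𝓝[<] (π/2))
      (𝓝 (∫ u in (0:ℝ)..(π/2), dd s u)) := (hcont.tendsto _).mono_left nhdsWithin_le_nhds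
  have l2 : Tendsto (fun b => ∫ t in (0:ℝ)..(s * Real.tan b), Real.exp (-(t ^ 2 + s ^ 2) / 2))
      (𝓝[<] (π/2)) (𝓝 (∫ t in Ioi (0:ℝ), Real.exp (-(t ^ 2 + s ^ 2) / 2))) := by
    apply MeasureTheory.intervalIntegral_tendsto_integral_Ioi
    · have : (fun t : ℝ => Real.exp (-(t ^ 2 + s ^ 2) / 2))
          = fun t : ℝ => Real.exp (-s ^ 2 / 2) * Real.exp (-t ^ 2 / 2) := by
        funext t; rw [← Real.exp_add]; ring_nf
      rw [this]
      exact (int_exp_half.const_mul _).integrableOn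
    · exact Real.tendsto_tan_pi_div_two.const_mul_atTop hs
  have key : ∀ᶠ b in 𝓝[<] (π/2), (∫ u in (0:ℝ)..b, dd s u)
      = ∫ t in (0:ℝ)..(s * Real.tan b), Real.exp (-(t ^ 2 + s ^ 2) / 2) := by
    filter_upwards [Ioo_mem_nhdsLT_of_mem (show (π/2:ℝ) ∈ Ioc 0 (π/2) from ⟨by positivity, le_rfl⟩)]
      with b hb
    have hcos : ∀ u ∈ uIcc (0:ℝ) b, 0 < Real.cos u := by
      intro u hu
      rw [uIcc_of_le hb.1.le] at hu
      apply Real.cos_pos_of_mem_Ioo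
      constructor
      · linarith [hu.1, Real.pi_pos]
      · exact lt_of_le_of_lt hu.2 hb.2
    have hsub := intervalIntegral.integral_comp_smul_deriv
      (f := fun u => s * Real.tan u) (f' := fun u => s / Real.cos u ^ 2)
      (g := fun t => Real.exp (-(t ^ 2 + s ^ 2) / 2)) (a := 0) (b := b)
      (fun u hu => by
        have h := (Real.hasDerivAt_tan (hcos u hu).ne').const_mul s
        exact h.congr_deriv (by ring))
      (by
        apply ContinuousOn.div continuousOn_const (Continuous.continuousOn (by fun_prop))
        intro u hu; exact pow_ne_zero 2 (hcos u hu).ne')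
      (by fun_prop)
    simp only [Function.comp_def] at hsub
    rw [Real.tan_zero, mul_zero] at hsub
    rw [← hsub]
    apply intervalIntegral.integral_congr
    intro u hu
    have hc := (hcos u hu).ne'
    have h1 : -((s * Real.tan u) ^ 2 + s ^ 2) / 2 = -s ^ 2 / (2 * Real.cos u ^ 2) := by
      have h2 : Real.cos u ^ 2 * (1 + Real.tan u ^ 2) = 1 := by
        rw [← Real.inv_one_add_tan_sq hc]
        field_simp
      field_simp
      linear_combination (-1) * h2
    simp only [dd, smul_eq_mul, h1]
  have l2' : Tendsto (fun b => ∫ u in (0:ℝ)..b, dd s u) (𝓝[<] (π/2))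
      (𝓝 (∫ t in Ioi (0:ℝ), Real.exp (-(t ^ 2 + s ^ 2) / 2))) := by
    have keq : (fun b => ∫ u in (0:ℝ)..b, dd s u)
        =ᶠ[𝓝[<] (π/2)] fun b => ∫ t in (0:ℝ)..(s * Real.tan b), Real.exp (-(t ^ 2 + s ^ 2) / 2) := key
    exact l2.congr' keq.symm
  have := tendsto_nhds_unique l1 l2'
  rw [this]
  have : (fun t : ℝ => Real.exp (-(t ^ 2 + s ^ 2) / 2))
      = fun t : ℝ => Real.exp (-s ^ 2 / 2) * Real.exp (-t ^ 2 / 2) := by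
    funext t; rw [← Real.exp_add]; ring_nf
  rw [this, MeasureTheory.integral_const_mul, int_Ioi_exp_half]
  ring



-- pointwise derivative, all u, all x
lemma hasDeriv_pt (u : ℝ) (x : ℝ) :
    HasDerivAt (fun s : ℝ => 1 - Real.exp (-s ^ 2 / (2 * Real.cos u ^ 2))) (dd x u) x := by
  rcases eq_or_ne (Real.cos u) 0 with hc | hc
  · have h0 : (fun s : ℝ => 1 - Real.exp (-s ^ 2 / (2 * Real.cos u ^ 2))) = fun _ => 0 := by
      funext s; rw [hc]; norm_num
    have hd0 : dd x u = 0 := by unfold dd; rw [hc]; norm_num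
    rw [h0, hd0]; exact hasDerivAt_const x 0
  · have hc2 : (2 * Real.cos u ^ 2) ≠ 0 := by positivity
    have h1 := (hasDerivAt_pow 2 x).neg.div_const (2 * Real.cos u ^ 2)
    have h2 := (h1.exp).const_sub 1
    refine HasDerivAt.congr_deriv h2 ?_
    simp only [Pi.neg_apply]
    unfold dd
    rw [neg_div]
    field_simp
    ring

-- Lemma B: derivative under the integral sign
lemma lemB {s : ℝ} (hs : 0 < s) :
    HasDerivAt (fun x : ℝ => ∫ u in (0:ℝ)..(π/2), (1 - Real.exp (-x ^ 2 / (2 * Real.cos u ^ 2))))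
      (∫ u in (0:ℝ)..(π/2), dd s u) s := by
  have hball : ∀ x ∈ Metric.ball s (s/2), s/2 < x := by
    intro x hx
    rw [Metric.mem_ball, Real.dist_eq, abs_lt] at hx
    linarith [hx.1]
  have H := intervalIntegral.hasDerivAt_integral_of_dominated_loc_of_deriv_le
    (F := fun x u => 1 - Real.exp (-x ^ 2 / (2 * Real.cos u ^ 2)))
    (F' := fun x u => dd x u) (x₀ := s) (a := 0) (b := π/2) (μ := volume)
    (bound := fun _ => 4 / s) (s := Metric.ball s (s/2)) (Metric.ball_mem_nhds s (by positivity))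
    (Eventually.of_forall fun x => (g_mble x).aestronglyMeasurable)
    (intInt_of_bounded (g_mble s) (g_bound s) 0 (π/2))
    ((dd_mble s).aestronglyMeasurable)
    (ae_of_all _ fun u _ x hx => by
      have hx2 : 0 < x := lt_trans (by positivity) (hball x hx)
      rw [Real.norm_eq_abs]
      calc |dd x u| ≤ 2 / x := dd_bound hx2 u
        _ ≤ 4 / s := by
          rw [div_le_div_iff₀ hx2 hs]
          nlinarith [hball x hx])
    (intervalIntegrable_const)
    (ae_of_all _ fun u _ x _ => hasDeriv_pt u x)
  exact H.2

lemma F_tendsto_zero :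
    Tendsto (fun x : ℝ => ∫ u in (0:ℝ)..(π/2), (1 - Real.exp (-x ^ 2 / (2 * Real.cos u ^ 2))))
      (𝓝[>] (0:ℝ)) (𝓝 0) := by
  have hle : (0:ℝ) ≤ π/2 := by positivity
  simp_rw [intervalIntegral.integral_of_le hle, MeasureTheory.integral_Ioc_eq_integral_Ioo]
  have main : Tendsto
      (fun x : ℝ => ∫ u in Ioo (0:ℝ) (π/2), (1 - Real.exp (-x ^ 2 / (2 * Real.cos u ^ 2))))
      (𝓝[>] (0:ℝ)) (𝓝 (∫ u in Ioo (0:ℝ) (π/2), (0:ℝ))) := by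
    apply MeasureTheory.tendsto_integral_filter_of_dominated_convergence (fun _ => (1:ℝ))
    · exact Eventually.of_forall fun x => (g_mble x).aestronglyMeasurable.restrict
    · exact Eventually.of_forall fun x => ae_of_all _ fun u => by
        rw [Real.norm_eq_abs]; exact g_bound x u
    · simp [Real.volume_Ioo]
    · apply ae_of_all
      intro u
      rcases eq_or_ne (Real.cos u) 0 with hc | hc
      · simp [hc]
      · have hcont : Continuous (fun x : ℝ => 1 - Real.exp (-x ^ 2 / (2 * Real.cos u ^ 2))) := by
          fun_prop
        have := (hcont.tendsto 0).mono_left (nhdsWithin_le_nhds (s := Ioi (0:ℝ)))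
        simpa using this
  simpa using main

lemma exp_half_bound (x : ℝ) : |Real.exp (-x ^ 2 / 2)| ≤ 1 := by
  rw [abs_of_pos (Real.exp_pos _)]
  apply Real.exp_le_one_iff.mpr
  have : (0:ℝ) ≤ x ^ 2 := sq_nonneg x
  linarith

lemma exp_half_intInt (a b : ℝ) :
    IntervalIntegrable (fun x : ℝ => Real.exp (-x ^ 2 / 2)) volume a b :=
  intInt_of_bounded (by fun_prop) exp_half_bound a b

lemma F_eq {s : ℝ} (hs : 0 < s) :
    (∫ u in (0:ℝ)..(π/2), (1 - Real.exp (-s ^ 2 / (2 * Real.cos u ^ 2))))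
      = Real.sqrt (π/2) * ∫ x in (0:ℝ)..s, Real.exp (-x ^ 2 / 2) := by
  set F : ℝ → ℝ :=
    fun x => ∫ u in (0:ℝ)..(π/2), (1 - Real.exp (-x ^ 2 / (2 * Real.cos u ^ 2))) with hF
  set J : ℝ → ℝ := fun x => ∫ t in (0:ℝ)..x, Real.exp (-t ^ 2 / 2) with hJ
  have hJc : Continuous J :=
    intervalIntegral.continuous_primitive (fun a b => exp_half_intInt a b) 0
  have key : ∀ ε ∈ Ioo (0:ℝ) s, F s = F ε + Real.sqrt (π/2) * (J s - J ε) := by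
    intro ε hε
    have hderiv : ∀ x ∈ uIcc ε s, HasDerivAt F (Real.sqrt (π/2) * Real.exp (-x ^ 2 / 2)) x := by
      intro x hx
      rw [uIcc_of_le hε.2.le] at hx
      have hx0 : 0 < x := lt_of_lt_of_le hε.1 hx.1
      have := lemB hx0
      rw [lemA hx0] at this
      exact this
    have hInt : IntervalIntegrable (fun x => Real.sqrt (π/2) * Real.exp (-x ^ 2 / 2))
        volume ε s := (exp_half_intInt ε s).const_mul _
    have h1 := intervalIntegral.integral_eq_sub_of_hasDerivAt hderiv hInt
    have h2 : ∫ x in ε..s, Real.sqrt (π/2) * Real.exp (-x ^ 2 / 2)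
        = Real.sqrt (π/2) * (J s - J ε) := by
      rw [intervalIntegral.integral_const_mul]
      congr 1
      rw [hJ]
      rw [← intervalIntegral.integral_interval_sub_left (exp_half_intInt 0 s)
        (exp_half_intInt 0 ε)]
    rw [h2] at h1
    linarith
  have hne : (𝓝[>] (0:ℝ)).NeBot := by infer_instance
  have hev : ∀ᶠ ε in 𝓝[>] (0:ℝ), F s = F ε + Real.sqrt (π/2) * (J s - J ε) := by
    filter_upwards [Ioo_mem_nhdsGT_of_mem (show (0:ℝ) ∈ Ico 0 s from ⟨le_rfl, hs⟩)] with ε hε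
    exact key ε hε
  have hlim : Tendsto (fun ε => F ε + Real.sqrt (π/2) * (J s - J ε)) (𝓝[>] (0:ℝ))
      (𝓝 (0 + Real.sqrt (π/2) * (J s - J 0))) := by
    apply Tendsto.add F_tendsto_zero
    apply Tendsto.const_mul
    exact (tendsto_const_nhds.sub ((hJc.tendsto 0).mono_left nhdsWithin_le_nhds))
  have hJ0 : J 0 = 0 := by simp [hJ]
  have : Tendsto (fun _ : ℝ => F s) (𝓝[>] (0:ℝ)) (𝓝 (0 + Real.sqrt (π/2) * (J s - J 0))) :=
    hlim.congr' (hev.mono fun ε h => h.symm)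
  have heq := tendsto_nhds_unique tendsto_const_nhds this
  rw [hJ0] at heq
  show F s = Real.sqrt (π/2) * J s
  rw [heq]; ring

lemma int_Iic_exp_half : ∫ x in Iic (0:ℝ), Real.exp (-x ^ 2 / 2) = Real.sqrt (π / 2) := by
  have h := integral_comp_neg_Ioi (0:ℝ) (fun x => Real.exp (-x ^ 2 / 2))
  simp only [neg_sq, neg_zero] at h
  rw [← h, int_Ioi_exp_half]

lemma Phi_eq (s : ℝ) : ((gaussianReal 0 1) (Iic s)).toReal
    = (Real.sqrt (2 * π))⁻¹ * ∫ x in Iic s, Real.exp (-x ^ 2 / 2) := by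
  rw [gaussianReal_apply_eq_integral 0 one_ne_zero, ENNReal.toReal_ofReal
    (setIntegral_nonneg measurableSet_Iic fun x _ => gaussianPDFReal_nonneg 0 1 x)]
  rw [← MeasureTheory.integral_const_mul]
  apply setIntegral_congr_fun measurableSet_Iic
  intro x _
  simp [gaussianPDFReal, NNReal.coe_one]

lemma Phi_formula {s : ℝ} (_hs : 0 ≤ s) : ((gaussianReal 0 1) (Iic s)).toReal
    = (Real.sqrt (2 * π))⁻¹ * (Real.sqrt (π / 2) + ∫ x in (0:ℝ)..s, Real.exp (-x ^ 2 / 2)) := by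
  rw [Phi_eq]
  congr 1
  have hsplit : (∫ x in Iic s, Real.exp (-x ^ 2 / 2)) - ∫ x in Iic (0:ℝ), Real.exp (-x ^ 2 / 2)
      = ∫ x in (0:ℝ)..s, Real.exp (-x ^ 2 / 2) :=
    intervalIntegral.integral_Iic_sub_Iic int_exp_half.integrableOn int_exp_half.integrableOn
  rw [← hsplit, int_Iic_exp_half]
  ring

lemma F_eq' {s : ℝ} (hs : 0 ≤ s) :
    (∫ u in (0:ℝ)..(π/2), (1 - Real.exp (-s ^ 2 / (2 * Real.cos u ^ 2))))
      = Real.sqrt (π/2) * ∫ x in (0:ℝ)..s, Real.exp (-x ^ 2 / 2) := by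
  rcases hs.eq_or_lt with h | h
  · subst h
    norm_num
  · exact F_eq h


/-- As `ℓ → 0`, `P_ℓ(s)` converges pointwise to
`P₀(s) = (2/π)∫₀^{π/2}[1 − e^{−s²/(2cos²u)}] du`, and `P₀(s) = 2Φ(s) − 1` where `Φ` is
the standard normal CDF; consequently the `(1−α)`-quantile of `P₀` equals `Φ⁻¹(1 − α/2)`,
i.e. a point `c ≥ 0` satisfies `P₀(c) = 1 − α` iff `Φ(c) = 1 − α/2`. -/
theorem stmt_8 (P : ℝ → ℝ → ℝ)
    (hP : ∀ ℓ ∈ Icc 0 π, ∀ s : ℝ, P ℓ s =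
      (ℓ / π) * (1 - Real.exp (-s ^ 2 / 2)) +
        (2 / π) * ∫ u in (0 : ℝ)..(π / 2 - ℓ / 2),
          (1 - Real.exp (-s ^ 2 / (2 * Real.cos u ^ 2))))
    (P₀ : ℝ → ℝ)
    (hP₀ : ∀ s : ℝ, P₀ s =
      (2 / π) * ∫ u in (0 : ℝ)..(π / 2),
        (1 - Real.exp (-s ^ 2 / (2 * Real.cos u ^ 2))))
    (Φ : ℝ → ℝ) (hΦ : ∀ s : ℝ, Φ s = ((gaussianReal 0 1) (Iic s)).toReal) :
    (∀ s : ℝ, 0 ≤ s → Tendsto (fun ℓ => P ℓ s) (nhdsWithin 0 (Icc 0 π)) (nhds (P₀ s))) ∧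
      (∀ s : ℝ, 0 ≤ s → P₀ s = 2 * Φ s - 1) ∧
      ∀ a : ℝ, a ∈ Ioo (0 : ℝ) 1 →
        ∀ c : ℝ, 0 ≤ c → (P₀ c = 1 - a ↔ Φ c = 1 - a / 2) := by
  have hpi : (0:ℝ) < π := Real.pi_pos
  have hA : (0:ℝ) < Real.sqrt (π/2) := Real.sqrt_pos.mpr (by positivity)
  have hA2 : Real.sqrt (π/2) ^ 2 = π/2 := Real.sq_sqrt (by positivity)
  -- Part 2
  have part2 : ∀ s : ℝ, 0 ≤ s → P₀ s = 2 * Φ s - 1 := by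
    intro s hs
    rw [hP₀ s, hΦ s, F_eq' hs, Phi_formula hs, sqrt_two_pi]
    set A := Real.sqrt (π/2)
    set J := ∫ x in (0:ℝ)..s, Real.exp (-x ^ 2 / 2)
    field_simp
    linear_combination (2 * J) * hA2
  refine ⟨?_, part2, ?_⟩
  · -- Part 1
    intro s _
    have hgint : ∀ a b : ℝ, IntervalIntegrable
        (fun u => 1 - Real.exp (-s ^ 2 / (2 * Real.cos u ^ 2))) volume a b :=
      intInt_of_bounded (g_mble s) (g_bound s)
    have hprim : Continuous (fun x : ℝ => ∫ u in (0:ℝ)..x,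
        (1 - Real.exp (-s ^ 2 / (2 * Real.cos u ^ 2)))) :=
      intervalIntegral.continuous_primitive hgint 0
    have hcontE : Continuous (fun ℓ : ℝ => (ℓ / π) * (1 - Real.exp (-s ^ 2 / 2)) +
        (2 / π) * ∫ u in (0 : ℝ)..(π / 2 - ℓ / 2),
          (1 - Real.exp (-s ^ 2 / (2 * Real.cos u ^ 2)))) := by
      apply Continuous.add
      · fun_prop
      · exact continuous_const.mul (hprim.comp (by fun_prop))
    have hlim : Tendsto (fun ℓ : ℝ => (ℓ / π) * (1 - Real.exp (-s ^ 2 / 2)) +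
        (2 / π) * ∫ u in (0 : ℝ)..(π / 2 - ℓ / 2),
          (1 - Real.exp (-s ^ 2 / (2 * Real.cos u ^ 2))))
        (𝓝[Icc 0 π] 0) (𝓝 (P₀ s)) := by
      have h0 : ((0:ℝ) / π) * (1 - Real.exp (-s ^ 2 / 2)) +
          (2 / π) * (∫ u in (0 : ℝ)..(π / 2 - 0 / 2),
            (1 - Real.exp (-s ^ 2 / (2 * Real.cos u ^ 2)))) = P₀ s := by
        rw [hP₀ s]
        norm_num
      rw [← h0]
      exact (hcontE.tendsto 0).mono_left nhdsWithin_le_nhds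
    apply hlim.congr'
    filter_upwards [self_mem_nhdsWithin] with ℓ hℓ
    exact (hP ℓ hℓ s).symm
  · -- Part 3
    intro a _ c hc
    have h2 := part2 c hc
    constructor
    · intro h; linarith
    · intro h; linarith
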